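/- (Dual Greene theorem) For every finite sequence r of integers and every k ≥ 0, the maximum total length of a subsequence of r that can be decomposed into k non-increasing subsequences equals α_k*(Ins(r)), the sum of the lengths of the first k columns of the Schensted insertion tableau Ins(r). -/

import Mathlib

/-- Schensted row insertion of `x` into a tableau (row-standard convention: rows strictly
increasing, columns non-decreasing). `x` replaces the leftmost entry `≥ x` of the first
row, and the replaced entry is inserted into the rest of the tableau; if no such entry
exists, `x` is appended to the first row. -/
def rowInsert : ℤ → List (List ℤ) → List (List ℤ)
  | x, [] => [[x]]
  | x, r :: rs =>
    match r.findIdx? (fun y => decide (x ≤ y)) with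
    | none => (r ++ [x]) :: rs
    | some j => (r.set j x) :: rowInsert (r.getD j 0) rs

/-- The insertion tableau `Ins(r)` of a sequence `r`, obtained by successively
row-inserting the entries of `r`. -/
def ins (r : List ℤ) : List (List ℤ) :=
  r.foldl (fun T x => rowInsert x T) []



namespace Greene

abbrev Lab (k : ℕ) := Option (Fin k)

def R (k : ℕ) : (ℤ × Lab k) → (ℤ × Lab k) → Prop :=
  fun p q => p.2.isSome → p.2 = q.2 → q.1 ≤ p.1

def S' (w : List ℤ) (k : ℕ) : Set ℕ :=
  {N | ∃ l : List (Lab k), l.length = w.length ∧ (w.zip l).Pairwise (R k) ∧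
    N = l.countP (fun o => o.isSome)}

lemma pairwise_triple {α : Type*} {R : α → α → Prop} {A B : List α} {c1 c2 c3 : α} :
    (A ++ c1 :: c2 :: c3 :: B).Pairwise R ↔
      A.Pairwise R ∧ B.Pairwise R ∧ R c1 c2 ∧ R c1 c3 ∧ R c2 c3 ∧
      (∀ a ∈ A, R a c1) ∧ (∀ a ∈ A, R a c2) ∧ (∀ a ∈ A, R a c3) ∧
      (∀ b ∈ B, R c1 b) ∧ (∀ b ∈ B, R c2 b) ∧ (∀ b ∈ B, R c3 b) ∧
      (∀ a ∈ A, ∀ b ∈ B, R a b) := by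
  simp only [List.pairwise_append, List.pairwise_cons, List.mem_cons]
  aesop

lemma split3 {α : Type*} : ∀ (n : ℕ) (l : List α), n + 3 ≤ l.length →
    ∃ (la : List α) (o1 o2 o3 : α) (lb : List α),
      l = la ++ o1 :: o2 :: o3 :: lb ∧ la.length = n := by
  intro n
  induction n with
  | zero =>
    intro l hl
    match l, hl with
    | o1 :: o2 :: o3 :: lb, _ => exact ⟨[], o1, o2, o3, lb, rfl, rfl⟩
  | succ n ih =>
    intro l hl
    match l, hl with
    | a :: l', hl =>
      obtain ⟨la, o1, o2, o3, lb, rfl, hlen⟩ := ih l' (by simp only [List.length_cons] at hl; omega)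
      exact ⟨a :: la, o1, o2, o3, lb, rfl, by simp [hlen]⟩

lemma S'_shift {k : ℕ} (a b : List ℤ) (t1 t2 t3 u1 u2 u3 : ℤ)
    (H : ∀ (la lb : List (Lab k)) (o1 o2 o3 : Lab k), la.length = a.length →
      lb.length = b.length →
      (a.zip la ++ (t1,o1) :: (t2,o2) :: (t3,o3) :: (b.zip lb)).Pairwise (R k) →
      ∃ (lb' : List (Lab k)) (o1' o2' o3' : Lab k), lb'.length = b.length ∧
        (a.zip la ++ (u1,o1') :: (u2,o2') :: (u3,o3') :: (b.zip lb')).Pairwise (R k) ∧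
        (la ++ o1' :: o2' :: o3' :: lb').countP (fun o => o.isSome)
          = (la ++ o1 :: o2 :: o3 :: lb).countP (fun o => o.isSome)) :
    S' (a ++ t1 :: t2 :: t3 :: b) k ⊆ S' (a ++ u1 :: u2 :: u3 :: b) k := by
  rintro N ⟨l, hlen, hpw, rfl⟩
  simp only [List.length_append, List.length_cons] at hlen
  obtain ⟨la, o1, o2, o3, lb, rfl, hla⟩ := split3 a.length l (by omega)
  have hlb : lb.length = b.length := by
    simp only [List.length_append, List.length_cons] at hlen; omega
  rw [List.zip_append hla.symm, List.zip_cons_cons, List.zip_cons_cons,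
    List.zip_cons_cons] at hpw
  obtain ⟨lb', o1', o2', o3', hlb', hpw', hcnt⟩ := H la lb o1 o2 o3 hla hlb hpw
  refine ⟨la ++ o1' :: o2' :: o3' :: lb', ?_, ?_, hcnt.symm⟩
  · simp only [List.length_append, List.length_cons]; omega
  · rw [List.zip_append hla.symm, List.zip_cons_cons, List.zip_cons_cons,
      List.zip_cons_cons]
    exact hpw'

def sw {k : ℕ} (s t : Fin k) (o : Lab k) : Lab k :=
  if o = some s then some t else if o = some t then some s else o

lemma sw_isSome {k : ℕ} (s t : Fin k) (o : Lab k) : (sw s t o).isSome = o.isSome := by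
  unfold sw; split_ifs <;> simp_all

lemma sw_invol {k : ℕ} (s t : Fin k) (o : Lab k) : sw s t (sw s t o) = o := by
  unfold sw; split_ifs <;> simp_all

lemma sw_inj {k : ℕ} (s t : Fin k) : Function.Injective (sw s t) :=
  Function.Involutive.injective (sw_invol s t)

lemma R_def {k : ℕ} (p q : ℤ × Lab k) : R k p q ↔ (p.2.isSome → p.2 = q.2 → q.1 ≤ p.1) :=
  Iff.rfl

/-- Pairwise is preserved by relabeling with `sw`. -/
lemma pairwise_sw {k : ℕ} (s t : Fin k) (b : List ℤ) (lb : List (Lab k))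
    (h : (b.zip lb).Pairwise (R k)) :
    (b.zip (lb.map (sw s t))).Pairwise (R k) := by
  rw [List.zip_map_right, List.pairwise_map]
  refine h.imp ?_
  intro p q hpq h1 h2
  simp only [Prod.map, id] at h1 h2 ⊢
  rw [sw_isSome] at h1
  exact hpq h1 (sw_inj s t h2)

lemma countP_sw {k : ℕ} (s t : Fin k) (lb : List (Lab k)) :
    (lb.map (sw s t)).countP (fun o => o.isSome) = lb.countP (fun o => o.isSome) := by
  rw [List.countP_map]
  exact List.countP_congr (fun o _ => by simp [Function.comp, sw_isSome])

lemma mem_zip_map_sw {k : ℕ} {s t : Fin k} {b : List ℤ} {lb : List (Lab k)} {q : ℤ × Lab k}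
    (hq : q ∈ b.zip (lb.map (sw s t))) :
    ∃ p ∈ b.zip lb, q = (p.1, sw s t p.2) := by
  rw [List.zip_map_right] at hq
  obtain ⟨p, hp, rfl⟩ := List.mem_map.mp hq
  exact ⟨p, hp, rfl⟩

lemma sub_r1_fwd {k : ℕ} (a b : List ℤ) (x y z : ℤ) (h1 : x ≤ y) (h2 : y < z) :
    S' (a ++ y :: x :: z :: b) k ⊆ S' (a ++ y :: z :: x :: b) k := by
  refine S'_shift a b y x z y z x ?_
  intro la lb o1 o2 o3 hla hlb hpw
  rw [pairwise_triple] at hpw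
  obtain ⟨hA, hB, h12, h13, h23, hA1, hA2, hA3, h1B, h2B, h3B, hAB⟩ := hpw
  refine ⟨lb, o1, o3, o2, hlb, ?_, by simp [List.countP_append, List.countP_cons]; omega⟩
  rw [pairwise_triple]
  refine ⟨hA, hB, h13, h12, fun _ _ => by omega, hA1, hA3, hA2, h1B, h3B, h2B, hAB⟩

lemma sub_r2_fwd {k : ℕ} (a b : List ℤ) (x y z : ℤ) (h1 : x < y) (h2 : y ≤ z) :
    S' (a ++ x :: z :: y :: b) k ⊆ S' (a ++ z :: x :: y :: b) k := by
  refine S'_shift a b x z y z x y ?_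
  intro la lb o1 o2 o3 hla hlb hpw
  rw [pairwise_triple] at hpw
  obtain ⟨hA, hB, h12, h13, h23, hA1, hA2, hA3, h1B, h2B, h3B, hAB⟩ := hpw
  refine ⟨lb, o2, o1, o3, hlb, ?_, by simp [List.countP_append, List.countP_cons]; omega⟩
  rw [pairwise_triple]
  refine ⟨hA, hB, fun _ _ => by omega, h23, h13, hA2, hA1, hA3, h2B, h1B, h3B, hAB⟩

lemma sw_apply_t {k : ℕ} {s t : Fin k} (hst : s ≠ t) : sw s t (some t) = some s := by
  simp [sw, (by simpa using hst.symm : (some t : Lab k) ≠ some s)]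

lemma sw_apply_s {k : ℕ} (s t : Fin k) : sw s t (some s) = some t := by simp [sw]

lemma sw_fix {k : ℕ} {s t : Fin k} {o : Lab k} (hs : o ≠ some s) (ht : o ≠ some t) :
    sw s t o = o := by simp [sw, hs, ht]

lemma sub_r1_bwd {k : ℕ} (a b : List ℤ) (x y z : ℤ) (h1 : x ≤ y) (h2 : y < z) :
    S' (a ++ y :: z :: x :: b) k ⊆ S' (a ++ y :: x :: z :: b) k := by
  refine S'_shift a b y z x y x z ?_
  intro la lb o1 o2 o3 hla hlb hpw
  rw [pairwise_triple] at hpw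
  obtain ⟨hA, hB, h12, h13, h23, hA1, hA2, hA3, h1B, h2B, h3B, hAB⟩ := hpw
  by_cases hc : o2.isSome ∧ o2 = o3
  · obtain ⟨t, ht⟩ := Option.isSome_iff_exists.mp hc.1
    have ho3 : o3 = some t := hc.2 ▸ ht
    subst ht; subst ho3
    match o1 with
    | none =>
      refine ⟨lb, some t, some t, none, hlb, ?_,
        by simp [List.countP_append, List.countP_cons]⟩
      rw [pairwise_triple]
      refine ⟨hA, hB, fun _ _ => h1, fun _ he => by simp at he, fun _ he => by simp at he,
        ?_, ?_, ?_, ?_, h3B, ?_, hAB⟩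
      · intro a ha hs he
        have h' : z ≤ a.1 := hA2 a ha hs he
        show y ≤ a.1; omega
      · intro a ha hs he
        have h' : z ≤ a.1 := hA2 a ha hs he
        show x ≤ a.1; omega
      · intro a ha hs he; rw [he] at hs; simp at hs
      · intro p hp _ he
        have h' : p.1 ≤ x := h3B p hp rfl he
        show p.1 ≤ y; omega
      · intro p hp hs; simp at hs
    | some s =>
      have hst : s ≠ t := by
        rintro rfl
        have h' : z ≤ y := h12 rfl rfl
        omega
      have hswt : sw s t (some t) = some s := sw_apply_t hst
      refine ⟨lb.map (sw s t), some s, some s, some t, by simp [hlb], ?_, ?_⟩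
      swap
      · simp only [List.countP_append, List.countP_cons, List.countP_map]
        have h' : List.countP ((fun o => Option.isSome o) ∘ sw s t) lb
            = List.countP (fun o => Option.isSome o) lb :=
          List.countP_congr (fun o _ => by simp [Function.comp, sw_isSome])
        simp [h']
      rw [pairwise_triple]
      refine ⟨hA, pairwise_sw s t b lb hB, fun _ _ => h1,
        fun _ he => by simp only [Option.some.injEq] at he; exact absurd he hst,
        fun _ he => by simp only [Option.some.injEq] at he; exact absurd he hst,
        hA1, ?_, hA2, ?_, ?_, ?_, ?_⟩
      · intro a ha hs he
        have h' : y ≤ a.1 := hA1 a ha hs he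
        show x ≤ a.1; omega
      · intro q hq _ he
        obtain ⟨p, hp, rfl⟩ := mem_zip_map_sw hq
        have hp2 : p.2 = some t := sw_inj s t (by rw [hswt]; exact he.symm)
        have h' : p.1 ≤ x := h3B p hp rfl hp2.symm
        show p.1 ≤ y; omega
      · intro q hq _ he
        obtain ⟨p, hp, rfl⟩ := mem_zip_map_sw hq
        have hp2 : p.2 = some t := sw_inj s t (by rw [hswt]; exact he.symm)
        have h' : p.1 ≤ x := h3B p hp rfl hp2.symm
        show p.1 ≤ x; omega
      · intro q hq _ he
        obtain ⟨p, hp, rfl⟩ := mem_zip_map_sw hq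
        have hp2 : p.2 = some s := sw_inj s t (by rw [sw_apply_s]; exact he.symm)
        have h' : p.1 ≤ y := h1B p hp rfl hp2.symm
        show p.1 ≤ z; omega
      · intro a ha q hq hs he
        obtain ⟨p, hp, rfl⟩ := mem_zip_map_sw hq
        by_cases hps : p.2 = some s
        · rw [hps, sw_apply_s] at he
          have ha1 : z ≤ a.1 := hA2 a ha hs he
          have hb1 : p.1 ≤ y := h1B p hp rfl hps.symm
          show p.1 ≤ a.1; omega
        · by_cases hpt : p.2 = some t
          · rw [hpt, hswt] at he
            have ha1 : y ≤ a.1 := hA1 a ha hs he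
            have hb1 : p.1 ≤ x := h3B p hp rfl hpt.symm
            show p.1 ≤ a.1; omega
          · rw [sw_fix hps hpt] at he
            exact hAB a ha p hp hs he
  · refine ⟨lb, o1, o3, o2, hlb, ?_, by simp [List.countP_append, List.countP_cons]; omega⟩
    rw [pairwise_triple]
    refine ⟨hA, hB, h13, h12, ?_, hA1, hA3, hA2, h1B, h3B, h2B, hAB⟩
    intro hs he
    have he' : o3 = o2 := he
    have hs' : o3.isSome := hs
    exact absurd ⟨he' ▸ hs', he'.symm⟩ hc

lemma sub_r2_bwd {k : ℕ} (a b : List ℤ) (x y z : ℤ) (h1 : x < y) (h2 : y ≤ z) :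
    S' (a ++ z :: x :: y :: b) k ⊆ S' (a ++ x :: z :: y :: b) k := by
  refine S'_shift a b z x y x z y ?_
  intro la lb o1 o2 o3 hla hlb hpw
  rw [pairwise_triple] at hpw
  obtain ⟨hA, hB, h12, h13, h23, hA1, hA2, hA3, h1B, h2B, h3B, hAB⟩ := hpw
  by_cases hc : o1.isSome ∧ o1 = o2
  · obtain ⟨t, ht⟩ := Option.isSome_iff_exists.mp hc.1
    have ho2 : o2 = some t := hc.2 ▸ ht
    subst ht; subst ho2
    match o3 with
    | none =>
      refine ⟨lb, none, some t, some t, hlb, ?_,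
        by simp [List.countP_append, List.countP_cons]⟩
      rw [pairwise_triple]
      refine ⟨hA, hB, fun hs => by simp at hs, fun hs => by simp at hs, fun _ _ => h2,
        ?_, hA1, ?_, fun p hp hs => by simp at hs, ?_, ?_, hAB⟩
      · intro a ha hs he; rw [he] at hs; simp at hs
      · intro a ha hs he
        have h' : z ≤ a.1 := hA1 a ha hs he
        show y ≤ a.1; omega
      · intro p hp _ he
        have h' : p.1 ≤ x := h2B p hp rfl he
        show p.1 ≤ z; omega
      · intro p hp _ he
        have h' : p.1 ≤ x := h2B p hp rfl he
        show p.1 ≤ y; omega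
    | some s =>
      have hst : s ≠ t := by
        rintro rfl
        have h' : y ≤ x := h23 rfl rfl
        omega
      have hswt : sw s t (some t) = some s := sw_apply_t hst
      refine ⟨lb.map (sw s t), some s, some t, some t, by simp [hlb], ?_, ?_⟩
      swap
      · simp only [List.countP_append, List.countP_cons, List.countP_map]
        have h' : List.countP ((fun o => Option.isSome o) ∘ sw s t) lb
            = List.countP (fun o => Option.isSome o) lb :=
          List.countP_congr (fun o _ => by simp [Function.comp, sw_isSome])
        simp [h']
      rw [pairwise_triple]
      refine ⟨hA, pairwise_sw s t b lb hB,
        fun _ he => by simp only [Option.some.injEq] at he; exact absurd he hst,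
        fun _ he => by simp only [Option.some.injEq] at he; exact absurd he hst,
        fun _ _ => h2, ?_, hA1, ?_, ?_, ?_, ?_, ?_⟩
      · intro a ha hs he
        have h' : y ≤ a.1 := hA3 a ha hs he
        show x ≤ a.1; omega
      · intro a ha hs he
        have h' : z ≤ a.1 := hA1 a ha hs he
        show y ≤ a.1; omega
      · intro q hq _ he
        obtain ⟨p, hp, rfl⟩ := mem_zip_map_sw hq
        have hp2 : p.2 = some t := sw_inj s t (by rw [hswt]; exact he.symm)
        have h' : p.1 ≤ x := h2B p hp rfl hp2.symm
        show p.1 ≤ x; omega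
      · intro q hq _ he
        obtain ⟨p, hp, rfl⟩ := mem_zip_map_sw hq
        have hp2 : p.2 = some s := sw_inj s t (by rw [sw_apply_s]; exact he.symm)
        have h' : p.1 ≤ y := h3B p hp rfl hp2.symm
        show p.1 ≤ z; omega
      · intro q hq _ he
        obtain ⟨p, hp, rfl⟩ := mem_zip_map_sw hq
        have hp2 : p.2 = some s := sw_inj s t (by rw [sw_apply_s]; exact he.symm)
        have h' : p.1 ≤ y := h3B p hp rfl hp2.symm
        show p.1 ≤ y; omega
      · intro a ha q hq hs he
        obtain ⟨p, hp, rfl⟩ := mem_zip_map_sw hq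
        by_cases hps : p.2 = some s
        · rw [hps, sw_apply_s] at he
          have ha1 : z ≤ a.1 := hA1 a ha hs he
          have hb1 : p.1 ≤ y := h3B p hp rfl hps.symm
          show p.1 ≤ a.1; omega
        · by_cases hpt : p.2 = some t
          · rw [hpt, hswt] at he
            have ha1 : y ≤ a.1 := hA3 a ha hs he
            have hb1 : p.1 ≤ x := h2B p hp rfl hpt.symm
            show p.1 ≤ a.1; omega
          · rw [sw_fix hps hpt] at he
            exact hAB a ha p hp hs he
  · refine ⟨lb, o2, o1, o3, hlb, ?_, by simp [List.countP_append, List.countP_cons]; omega⟩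
    rw [pairwise_triple]
    refine ⟨hA, hB, ?_, h23, h13, hA2, hA1, hA3, h2B, h1B, h3B, hAB⟩
    intro hs he
    have he' : o2 = o1 := he
    have hs' : o2.isSome := hs
    exact absurd ⟨he' ▸ hs', he'.symm⟩ hc

inductive KStep : List ℤ → List ℤ → Prop
  | r1 (a b : List ℤ) (x y z : ℤ) (h1 : x ≤ y) (h2 : y < z) :
      KStep (a ++ y :: x :: z :: b) (a ++ y :: z :: x :: b)
  | r2 (a b : List ℤ) (x y z : ℤ) (h1 : x < y) (h2 : y ≤ z) :
      KStep (a ++ x :: z :: y :: b) (a ++ z :: x :: y :: b)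

def KEq : List ℤ → List ℤ → Prop :=
  Relation.ReflTransGen (fun u v => KStep u v ∨ KStep v u)

lemma KStep.S'_eq {k : ℕ} {w1 w2 : List ℤ} (h : KStep w1 w2) : S' w1 k = S' w2 k := by
  cases h with
  | r1 a b x y z h1 h2 =>
    exact Set.Subset.antisymm (sub_r1_fwd a b x y z h1 h2) (sub_r1_bwd a b x y z h1 h2)
  | r2 a b x y z h1 h2 =>
    exact Set.Subset.antisymm (sub_r2_fwd a b x y z h1 h2) (sub_r2_bwd a b x y z h1 h2)

lemma KEq.S'_eq {k : ℕ} {w1 w2 : List ℤ} (h : KEq w1 w2) : S' w1 k = S' w2 k := by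
  induction h with
  | refl => rfl
  | tail _ hstep ih =>
    rcases hstep with h' | h'
    · exact ih.trans h'.S'_eq
    · exact ih.trans h'.S'_eq.symm

lemma KEq.refl' (w : List ℤ) : KEq w w := Relation.ReflTransGen.refl

lemma KEq.trans' {u v w : List ℤ} (h1 : KEq u v) (h2 : KEq v w) : KEq u w :=
  Relation.ReflTransGen.trans h1 h2

lemma KEq.symm' {u v : List ℤ} (h : KEq u v) : KEq v u := by
  induction h with
  | refl => exact Relation.ReflTransGen.refl
  | tail _ hstep ih =>
    exact Relation.ReflTransGen.trans (Relation.ReflTransGen.single hstep.symm) ih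

lemma KEq.single_fwd {u v : List ℤ} (h : KStep u v) : KEq u v :=
  Relation.ReflTransGen.single (Or.inl h)

lemma KEq.single_bwd {u v : List ℤ} (h : KStep v u) : KEq u v :=
  Relation.ReflTransGen.single (Or.inr h)

lemma KStep.context {u v : List ℤ} (h : KStep u v) (c d : List ℤ) :
    KStep (c ++ u ++ d) (c ++ v ++ d) := by
  cases h with
  | r1 a b x y z h1 h2 =>
    have := KStep.r1 (c ++ a) (b ++ d) x y z h1 h2
    simpa [List.append_assoc] using this
  | r2 a b x y z h1 h2 =>
    have := KStep.r2 (c ++ a) (b ++ d) x y z h1 h2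
    simpa [List.append_assoc] using this

lemma KEq.context {u v : List ℤ} (h : KEq u v) (c d : List ℤ) :
    KEq (c ++ u ++ d) (c ++ v ++ d) := by
  induction h with
  | refl => exact Relation.ReflTransGen.refl
  | tail _ hstep ih =>
    refine Relation.ReflTransGen.tail ih ?_
    rcases hstep with h' | h'
    · exact Or.inl (h'.context c d)
    · exact Or.inr (h'.context c d)

/-- Move `x` leftwards through `v` until it sits just after `y`. -/
lemma keq_slide {x : ℤ} : ∀ (v : List ℤ) (y : ℤ), x ≤ y → List.Chain' (· < ·) (y :: v) →
    KEq (y :: (v ++ [x])) (y :: x :: v) := by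
  intro v
  induction v with
  | nil => intro y _ _; exact KEq.refl' _
  | cons z v' ih =>
    intro y hxy hch
    rw [List.Chain', List.isChain_cons_cons] at hch
    have h1 : KEq (z :: (v' ++ [x])) (z :: x :: v') :=
      ih z (le_of_lt (lt_of_le_of_lt hxy hch.1)) hch.2
    have h2 : KEq (y :: z :: (v' ++ [x])) (y :: z :: x :: v') := by
      have := h1.context [y] []
      simpa using this
    refine h2.trans' (KEq.single_bwd ?_)
    have := KStep.r1 [] v' x y z hxy hch.1
    simpa using this

/-- Move `y` leftwards through `u` to the front. -/
lemma keq_bubble {x y : ℤ} (v : List ℤ) : ∀ (u : List ℤ), (∀ w ∈ u, w < x) → x ≤ y →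
    List.Chain' (· < ·) u → KEq (u ++ y :: x :: v) (y :: (u ++ x :: v)) := by
  intro u
  induction u with
  | nil => intro _ _ _; exact KEq.refl' _
  | cons w u' ih =>
    intro hu hxy hch
    rw [List.Chain', List.isChain_cons] at hch
    have h1 : KEq (u' ++ y :: x :: v) (y :: (u' ++ x :: v)) :=
      ih (fun a ha => hu a (List.mem_cons_of_mem _ ha)) hxy hch.2
    have h2 : KEq (w :: (u' ++ y :: x :: v)) (w :: y :: (u' ++ x :: v)) := by
      have := h1.context [w] []
      simpa using this
    refine h2.trans' (KEq.single_fwd ?_)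
    cases u' with
    | nil =>
      have := KStep.r2 [] v w x y (hu w (List.mem_cons_self)) hxy
      simpa using this
    | cons w' u'' =>
      have hww' : w < w' := hch.1 w' (by simp)
      have hw'y : w' ≤ y :=
        le_of_lt (lt_of_lt_of_le (hu w' (by simp)) hxy)
      have := KStep.r2 [] (u'' ++ x :: v) w w' y hww' hw'y
      simpa using this

/-- Splitting a list at a `findIdx?` hit. -/
lemma getD_append_cons {α : Type*} (u : List α) (y : α) (v : List α) (d : α) :
    (u ++ y :: v).getD u.length d = y := by
  induction u with
  | nil => rfl
  | cons a u ih => simpa using ih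

lemma set_append_cons {α : Type*} (u : List α) (y x : α) (v : List α) :
    (u ++ y :: v).set u.length x = u ++ x :: v := by
  induction u with
  | nil => rfl
  | cons a u ih => simpa using ih

/-- The row bumping lemma: inserting `x` which bumps the entry at position `j`. -/
lemma row_bump (r : List ℤ) (x : ℤ) (j : ℕ)
    (h : r.findIdx? (fun w => decide (x ≤ w)) = some j) (hr : r.Pairwise (· < ·)) :
    KEq (r ++ [x]) (r.getD j 0 :: r.set j x) := by
  obtain ⟨hj, hpj, hmin⟩ := List.findIdx?_eq_some_iff_getElem.mp h
  obtain ⟨u, y0, v0, hru, hlenu⟩ :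
      ∃ u y0 v0, r = u ++ y0 :: v0 ∧ u.length = j := by
    refine ⟨r.take j, r[j], r.drop (j + 1), ?_, by simp [List.length_take]; omega⟩
    conv_lhs => rw [← List.take_append_drop j r]
    rw [List.getElem_cons_drop]
  have hxy0 : x ≤ y0 := by
    have : r.getD j 0 = y0 := by rw [hru, ← hlenu, getD_append_cons]
    rw [List.getD_eq_getElem r 0 hj] at this
    rw [← this]; simpa using hpj
  have htake : ∀ w ∈ u, w < x := by
    intro w hw
    obtain ⟨m, hm, rfl⟩ := List.mem_iff_getElem.mp hw
    have hmj : m < j := hlenu ▸ hm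
    have h1 := hmin m hmj
    have h2 : r[m]'(lt_trans hmj hj) = u[m] := by
      have : r.getD m 0 = u.getD m 0 := by rw [hru, List.getD_append _ _ _ _ hm]
      rw [List.getD_eq_getElem r 0 (lt_trans hmj hj), List.getD_eq_getElem u 0 hm] at this
      exact this
    rw [← h2]
    simpa using h1
  have hpw : (u ++ y0 :: v0).Pairwise (· < ·) := hru ▸ hr
  rw [List.pairwise_append] at hpw
  have hchain_drop : List.Chain' (· < ·) (y0 :: v0) :=
    List.isChain_iff_pairwise.mpr hpw.2.1
  have hchain_take : List.Chain' (· < ·) u := List.isChain_iff_pairwise.mpr hpw.1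
  have key : KEq ((u ++ y0 :: v0) ++ [x]) (y0 :: (u ++ x :: v0)) := by
    have h1 : KEq (u ++ (y0 :: (v0 ++ [x])) ++ []) (u ++ (y0 :: x :: v0) ++ []) :=
      (keq_slide v0 y0 hxy0 hchain_drop).context u []
    have h2 : KEq (u ++ y0 :: x :: v0) (y0 :: (u ++ x :: v0)) :=
      keq_bubble v0 u htake hxy0 hchain_take
    have e1 : (u ++ y0 :: v0) ++ [x] = u ++ (y0 :: (v0 ++ [x])) ++ [] := by simp
    have e2 : u ++ (y0 :: x :: v0) ++ [] = u ++ y0 :: x :: v0 := by simp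
    rw [e1]
    have h2' : KEq (u ++ (y0 :: x :: v0) ++ []) (y0 :: (u ++ x :: v0)) := by
      rw [e2]; exact h2
    exact h1.trans' h2'
  have hgd : r.getD j 0 = y0 := by rw [hru, ← hlenu, getD_append_cons]
  have hst : r.set j x = u ++ x :: v0 := by rw [hru, ← hlenu, set_append_cons]
  rw [hgd, hst, hru]
  exact key

/-! ### Tableaux -/

def word : List (List ℤ) → List ℤ
  | [] => []
  | r :: rs => word rs ++ r

def Dom (r r' : List ℤ) : Prop :=
  r'.length ≤ r.length ∧ ∀ j < r'.length, r.getD j 0 ≤ r'.getD j 0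

def IsTab (T : List (List ℤ)) : Prop :=
  (∀ r ∈ T, r.Pairwise (· < ·)) ∧ T.Chain' Dom

def ipos (x : ℤ) (r : List ℤ) : ℕ :=
  (r.findIdx? (fun w => decide (x ≤ w))).getD r.length

def irow (x : ℤ) (r : List ℤ) : List ℤ :=
  match r.findIdx? (fun w => decide (x ≤ w)) with
  | none => r ++ [x]
  | some j => r.set j x

section IrowLemmas

variable {x : ℤ} {r : List ℤ} {j : ℕ}

lemma ipos_none (h : r.findIdx? (fun w => decide (x ≤ w)) = none) :
    ipos x r = r.length := by unfold ipos; rw [h]; rfl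

lemma ipos_some (h : r.findIdx? (fun w => decide (x ≤ w)) = some j) :
    ipos x r = j := by unfold ipos; rw [h]; rfl

lemma irow_none (h : r.findIdx? (fun w => decide (x ≤ w)) = none) :
    irow x r = r ++ [x] := by unfold irow; rw [h]

lemma irow_some (h : r.findIdx? (fun w => decide (x ≤ w)) = some j) :
    irow x r = r.set j x := by unfold irow; rw [h]

lemma getD_lt_of_pairwise {m n : ℕ} (hr : r.Pairwise (· < ·))
    (hmn : m < n) (hn : n < r.length) : r.getD m 0 < r.getD n 0 := by
  rw [List.getD_eq_getElem r 0 (lt_trans hmn hn), List.getD_eq_getElem r 0 hn]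
  exact List.pairwise_iff_getElem.mp hr m n _ _ hmn

lemma getD_set' (r : List ℤ) (j : ℕ) (x : ℤ) (m : ℕ) (hm : m < r.length) :
    (r.set j x).getD m 0 = if j = m then x else r.getD m 0 := by
  rw [List.getD_eq_getElem _ 0 (by rwa [List.length_set]), List.getElem_set]
  split
  · rfl
  · rw [List.getD_eq_getElem r 0 hm]

lemma ipos_le (x : ℤ) (r : List ℤ) : ipos x r ≤ r.length := by
  cases hfi : r.findIdx? (fun w => decide (x ≤ w)) with
  | none => rw [ipos_none hfi]
  | some j =>
    obtain ⟨hj, -, -⟩ := List.findIdx?_eq_some_iff_getElem.mp hfi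
    rw [ipos_some hfi]
    exact le_of_lt hj

lemma len_irow (x : ℤ) (r : List ℤ) :
    (irow x r).length = max r.length (ipos x r + 1) := by
  cases hfi : r.findIdx? (fun w => decide (x ≤ w)) with
  | none => rw [irow_none hfi, ipos_none hfi]; simp
  | some j =>
    obtain ⟨hj, -, -⟩ := List.findIdx?_eq_some_iff_getElem.mp hfi
    rw [irow_some hfi, ipos_some hfi, List.length_set]
    omega

lemma getD_irow_self (x : ℤ) (r : List ℤ) : (irow x r).getD (ipos x r) 0 = x := by
  cases hfi : r.findIdx? (fun w => decide (x ≤ w)) with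
  | none => rw [irow_none hfi, ipos_none hfi]; exact getD_append_cons r x [] 0
  | some j =>
    obtain ⟨hj, -, -⟩ := List.findIdx?_eq_some_iff_getElem.mp hfi
    rw [irow_some hfi, ipos_some hfi, getD_set' r j x j hj]
    simp

lemma getD_irow_ne {m : ℕ} (hne : m ≠ ipos x r)
    (hm : m < (irow x r).length) : (irow x r).getD m 0 = r.getD m 0 := by
  cases hfi : r.findIdx? (fun w => decide (x ≤ w)) with
  | none =>
    rw [ipos_none hfi] at hne
    rw [irow_none hfi] at hm ⊢
    simp only [List.length_append, List.length_cons, List.length_nil] at hm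
    exact List.getD_append _ _ _ _ (by omega)
  | some j =>
    rw [irow_some hfi] at hm ⊢
    rw [ipos_some hfi] at hne
    rw [List.length_set] at hm
    rw [getD_set' r j x m hm]
    simp [Ne.symm hne]

lemma le_getD_ipos (h : ipos x r < r.length) : x ≤ r.getD (ipos x r) 0 := by
  cases hfi : r.findIdx? (fun w => decide (x ≤ w)) with
  | none => rw [ipos_none hfi] at h; omega
  | some j =>
    obtain ⟨hj, hp, -⟩ := List.findIdx?_eq_some_iff_getElem.mp hfi
    rw [ipos_some hfi, List.getD_eq_getElem r 0 hj]
    simpa using hp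

lemma getD_lt_of_lt_ipos {m : ℕ} (hm : m < ipos x r)
    (hmr : m < r.length) : r.getD m 0 < x := by
  cases hfi : r.findIdx? (fun w => decide (x ≤ w)) with
  | none =>
    have := List.findIdx?_eq_none_iff.mp hfi (r.getD m 0)
      (by rw [List.getD_eq_getElem r 0 hmr]; exact List.getElem_mem _)
    simpa using this
  | some j =>
    rw [ipos_some hfi] at hm
    obtain ⟨hj, -, hmin⟩ := List.findIdx?_eq_some_iff_getElem.mp hfi
    have := hmin m hm
    rw [List.getD_eq_getElem r 0 hmr]
    simpa using this

lemma ipos_le_of_le {q : ℕ} (hq : q < r.length)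
    (h : x ≤ r.getD q 0) : ipos x r ≤ q := by
  by_contra hc
  exact absurd h (not_le.mpr (getD_lt_of_lt_ipos (not_le.mp hc) hq))

lemma pairwise_irow (hr : r.Pairwise (· < ·)) :
    (irow x r).Pairwise (· < ·) := by
  cases hfi : r.findIdx? (fun w => decide (x ≤ w)) with
  | none =>
    rw [irow_none hfi, List.pairwise_append]
    refine ⟨hr, List.pairwise_singleton _ _, ?_⟩
    intro w hw b hb
    have := List.findIdx?_eq_none_iff.mp hfi w hw
    simp only [List.mem_singleton] at hb
    subst hb
    simpa using this
  | some j =>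
    obtain ⟨hj, hp, hmin⟩ := List.findIdx?_eq_some_iff_getElem.mp hfi
    rw [irow_some hfi]
    rw [List.pairwise_iff_getElem] at hr ⊢
    intro m n hm hn hmn
    rw [List.length_set] at hm hn
    rw [List.getElem_set, List.getElem_set]
    have hxj : x ≤ r[j] := by simpa using hp
    by_cases hjm : j = m
    · by_cases hjn : j = n
      · omega
      · rw [if_pos hjm, if_neg hjn]
        subst hjm
        exact lt_of_le_of_lt hxj (hr j n hj hn hmn)
    · by_cases hjn : j = n
      · rw [if_neg hjm, if_pos hjn]
        subst hjn
        have := hmin m hmn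
        simpa using this
      · rw [if_neg hjm, if_neg hjn]
        exact hr m n hm hn hmn

end IrowLemmas

lemma rowInsert_ne_nil (x : ℤ) (T : List (List ℤ)) : rowInsert x T ≠ [] := by
  cases T with
  | nil => simp [rowInsert]
  | cons r rs =>
    cases hfi : r.findIdx? (fun w => decide (x ≤ w)) <;> simp [rowInsert, hfi]

lemma headD_rowInsert (x : ℤ) (T : List (List ℤ)) :
    (rowInsert x T).headD [] = irow x (T.headD []) := by
  cases T with
  | nil => simp [rowInsert, irow]
  | cons r rs =>
    cases hfi : r.findIdx? (fun w => decide (x ≤ w)) <;> simp [rowInsert, irow, hfi]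

lemma dom_nil (r : List ℤ) : Dom r [] := ⟨by simp, fun j hj => by simp at hj⟩

lemma isTab_rowInsert : ∀ (T : List (List ℤ)) (x : ℤ), IsTab T → IsTab (rowInsert x T) := by
  intro T
  induction T with
  | nil =>
    intro x _
    refine ⟨?_, ?_⟩
    · intro r hr
      simp only [rowInsert, List.mem_singleton] at hr
      subst hr
      exact List.pairwise_singleton _ _
    · exact List.isChain_singleton _
  | cons r rs ih =>
    intro x hT
    obtain ⟨hrows, hch⟩ := hT
    have hrpw : r.Pairwise (· < ·) := hrows r (List.mem_cons_self)
    have hTrs : IsTab rs := ⟨fun r' hr' => hrows r' (List.mem_cons_of_mem _ hr'), hch.tail⟩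
    have hDom : Dom r (rs.headD []) := by
      cases rs with
      | nil => exact dom_nil r
      | cons r' rs' => exact (List.isChain_cons_cons.mp hch).1
    cases hfi : r.findIdx? (fun w => decide (x ≤ w)) with
    | none =>
      have hall : ∀ w ∈ r, w < x := by
        intro w hw
        have := List.findIdx?_eq_none_iff.mp hfi w hw
        simpa using this
      have hres : rowInsert x (r :: rs) = (r ++ [x]) :: rs := by
        simp [rowInsert, hfi]
      rw [hres]
      refine ⟨?_, ?_⟩
      · intro r' hr'
        rcases List.mem_cons.mp hr' with rfl | hr'
        · rw [List.pairwise_append]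
          exact ⟨hrpw, List.pairwise_singleton _ _, fun w hw b hb => by
            simp only [List.mem_singleton] at hb; subst hb; exact hall w hw⟩
        · exact hrows r' (List.mem_cons_of_mem _ hr')
      · cases rs with
        | nil => exact List.isChain_singleton _
        | cons r' rs' =>
          rw [List.Chain', List.isChain_cons_cons]
          refine ⟨?_, (List.isChain_cons_cons.mp hch).2⟩
          obtain ⟨hlen, hcol⟩ := (List.isChain_cons_cons.mp hch).1
          refine ⟨by simp; omega, ?_⟩
          intro m hm
          rw [List.getD_append _ _ _ _ (lt_of_lt_of_le hm hlen)]
          exact hcol m hm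
    | some j =>
      obtain ⟨hj, hp, hmin⟩ := List.findIdx?_eq_some_iff_getElem.mp hfi
      have hres : rowInsert x (r :: rs) = r.set j x :: rowInsert (r.getD j 0) rs := by
        simp [rowInsert, hfi]
      set y := r.getD j 0 with hy
      have hxy : x ≤ y := by
        rw [hy, List.getD_eq_getElem r 0 hj]; simpa using hp
      rw [hres]
      obtain ⟨ihrows, ihch⟩ := ih y hTrs
      have hjrow : irow x r = r.set j x := irow_some hfi
      have hjpos : ipos x r = j := ipos_some hfi
      refine ⟨?_, ?_⟩
      · intro r' hr'
        rcases List.mem_cons.mp hr' with rfl | hr'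
        · rw [← hjrow]; exact pairwise_irow hrpw
        · exact ihrows r' hr'
      · rw [List.Chain', List.isChain_cons]
        refine ⟨?_, ihch⟩
        intro h hh
        have hh' : h = (rowInsert y rs).headD [] := by
          cases hrs : rowInsert y rs with
          | nil => exact absurd hrs (rowInsert_ne_nil y rs)
          | cons a l => rw [hrs] at hh; simp only [List.head?_cons, Option.mem_def,
              Option.some.injEq] at hh; simp [hh]
        have hhead : h = irow y (rs.headD []) := by rw [hh', headD_rowInsert]
        subst hhead
        set rs0 := rs.headD [] with hrs0
        set p' := ipos y rs0 with hp'
        have hp'le : p' ≤ rs0.length := ipos_le y rs0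
        have hp'j : p' ≤ j := by
          by_cases hcase : j < rs0.length
          · rw [hp']; exact ipos_le_of_le hcase (hDom.2 j hcase)
          · omega
        constructor
        · rw [len_irow, List.length_set]
          have := hDom.1
          omega
        · intro m hm
          have hmlt : m < (irow y rs0).length := hm
          have hmr : m < r.length := by
            rw [len_irow] at hm
            have := hDom.1
            omega
          rw [getD_set' r j x m hmr]
          by_cases hmp : m = p'
          · have hrw : (irow y rs0).getD m 0 = y := by rw [hmp, hp', getD_irow_self]
            rw [hrw]
            by_cases hmj : j = m
            · rw [if_pos hmj]; exact hxy
            · rw [if_neg hmj]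
              have hlt : m < j := by omega
              exact le_of_lt (getD_lt_of_pairwise hrpw hlt hj)
          · have hmrs0 : m < rs0.length := by
              rw [len_irow] at hm
              omega
            have hne : m ≠ ipos y rs0 := by rw [← hp']; exact hmp
            rw [getD_irow_ne hne hmlt]
            by_cases hmj : j = m
            · rw [if_pos hmj, ← hmj]
              exact le_trans hxy (hDom.2 j (hmj ▸ hmrs0))
            · rw [if_neg hmj]
              exact hDom.2 m hmrs0

lemma isTab_ins (r : List ℤ) : IsTab (ins r) := by
  have main : ∀ (l : List ℤ) (T : List (List ℤ)), IsTab T →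
      IsTab (l.foldl (fun T x => rowInsert x T) T) := by
    intro l
    induction l with
    | nil => intro T hT; exact hT
    | cons a l ih =>
      intro T hT
      exact ih (rowInsert a T) (isTab_rowInsert T a hT)
  exact main r [] ⟨by simp, List.isChain_nil⟩

lemma word_rowInsert (x : ℤ) : ∀ (T : List (List ℤ)),
    (∀ r ∈ T, r.Pairwise (· < ·)) → KEq (word (rowInsert x T)) (word T ++ [x]) := by
  intro T
  induction T generalizing x with
  | nil => intro _; exact KEq.refl' _
  | cons r rs ih =>
    intro hrows
    cases hfi : r.findIdx? (fun w => decide (x ≤ w)) with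
    | none =>
      have hres : rowInsert x (r :: rs) = (r ++ [x]) :: rs := by simp [rowInsert, hfi]
      rw [hres]
      show KEq (word rs ++ (r ++ [x])) (word rs ++ r ++ [x])
      rw [List.append_assoc]
      exact KEq.refl' _
    | some j =>
      have hres : rowInsert x (r :: rs) = r.set j x :: rowInsert (r.getD j 0) rs := by
        simp [rowInsert, hfi]
      set y := r.getD j 0 with hy
      rw [hres]
      show KEq (word (rowInsert y rs) ++ r.set j x) (word rs ++ r ++ [x])
      have h1 : KEq (word (rowInsert y rs) ++ r.set j x) ((word rs ++ [y]) ++ r.set j x) := by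
        have := (ih y (fun r' hr' => hrows r' (List.mem_cons_of_mem _ hr'))).context [] (r.set j x)
        simpa using this
      have h2 : KEq (r ++ [x]) (y :: r.set j x) :=
        row_bump r x j hfi (hrows r (List.mem_cons_self))
      have h3 : KEq (word rs ++ (r ++ [x])) (word rs ++ (y :: r.set j x)) := by
        have := h2.context (word rs) []
        simpa using this
      refine h1.trans' ?_
      have e1 : (word rs ++ [y]) ++ r.set j x = word rs ++ (y :: r.set j x) := by simp
      have e2 : word rs ++ (r ++ [x]) = word rs ++ r ++ [x] := by simp
      rw [e1, ← e2]
      exact h3.symm'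

lemma keq_word_ins (r : List ℤ) : KEq (word (ins r)) r := by
  induction r using List.reverseRecOn with
  | nil => exact KEq.refl' _
  | append_singleton r' x ih =>
    have hins : ins (r' ++ [x]) = rowInsert x (ins r') := by
      unfold ins
      rw [List.foldl_append]
      rfl
    rw [hins]
    have h1 : KEq (word (rowInsert x (ins r'))) (word (ins r') ++ [x]) :=
      word_rowInsert x (ins r') (isTab_ins r').1
    have h2 : KEq (word (ins r') ++ [x]) (r' ++ [x]) := by
      have := ih.context [] [x]
      simpa using this
    exact h1.trans' h2

/-! ### Value of the invariant on reading words of tableaux -/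

lemma row_bound {k : ℕ} (r : List ℤ) (hr : r.Pairwise (· < ·)) (l2 : List (Lab k))
    (hlen : l2.length = r.length) (hpw : (r.zip l2).Pairwise (R k)) :
    l2.countP (fun o => o.isSome) ≤ min r.length k := by
  refine le_min ?_ ?_
  · exact hlen ▸ List.countP_le_length
  · have hzlen : (r.zip l2).length = l2.length := by
      rw [List.length_zip, hlen]; omega
    have hS : l2.Pairwise (fun o1 o2 => o1.isSome → o1 ≠ o2) := by
      rw [List.pairwise_iff_getElem] at hpw hr ⊢
      intro i j hi hj hij hs hne
      have hri : i < r.length := by omega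
      have hrj : j < r.length := by omega
      have h1 := hpw i j (by omega) (by omega) hij
      rw [List.getElem_zip, List.getElem_zip] at h1
      have h2 : r[j] ≤ r[i] := h1 hs hne
      have h3 : r[i] < r[j] := hr i j hri hrj hij
      omega
    set lf := l2.filter (fun o => o.isSome) with hlf
    have hnd : lf.Nodup := by
      refine List.Pairwise.imp_of_mem ?_ (hS.filter _)
      intro a b ha _ hab
      exact hab (by simpa using (List.mem_filter.mp ha).2)
    have hsub : lf.toFinset ⊆ Finset.univ.image (some : Fin k → Lab k) := by
      intro o ho
      rw [List.mem_toFinset, hlf, List.mem_filter] at ho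
      obtain ⟨u, rfl⟩ := Option.isSome_iff_exists.mp (by simpa using ho.2)
      simp
    calc l2.countP (fun o => o.isSome) = lf.length := List.countP_eq_length_filter
      _ = lf.toFinset.card := (List.toFinset_card_of_nodup hnd).symm
      _ ≤ (Finset.univ.image (some : Fin k → Lab k)).card := Finset.card_le_card hsub
      _ = k := by
          rw [Finset.card_image_of_injective _ (Option.some_injective _)]
          simp

lemma ub {k : ℕ} : ∀ (T : List (List ℤ)), (∀ r ∈ T, r.Pairwise (· < ·)) →
    ∀ l : List (Lab k), l.length = (word T).length → ((word T).zip l).Pairwise (R k) →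
    l.countP (fun o => o.isSome) ≤ (T.map fun row => min row.length k).sum := by
  intro T
  induction T with
  | nil =>
    intro _ l hlen _
    have : l = [] := List.length_eq_zero_iff.mp (by simpa [word] using hlen)
    subst this
    simp
  | cons r rs ih =>
    intro hrows l hlen hpw
    have hwlen : (word (r :: rs)).length = (word rs).length + r.length := by
      show (word rs ++ r).length = _
      simp
    set l1 := l.take (word rs).length with hl1
    set l2 := l.drop (word rs).length with hl2
    have hl : l = l1 ++ l2 := (List.take_append_drop _ l).symm
    have hlen1 : l1.length = (word rs).length := by
      rw [hl1, List.length_take]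
      omega
    have hlen2 : l2.length = r.length := by
      rw [hl2, List.length_drop]
      omega
    have hzip : (word (r :: rs)).zip l = ((word rs).zip l1) ++ (r.zip l2) := by
      show ((word rs) ++ r).zip l = _
      rw [hl, List.zip_append hlen1.symm]
    rw [hzip, List.pairwise_append] at hpw
    have hcnt : l.countP (fun o => o.isSome) =
        l1.countP (fun o => o.isSome) + l2.countP (fun o => o.isSome) := by
      rw [hl, List.countP_append]
    rw [hcnt]
    have h1 := ih (fun r' hr' => hrows r' (List.mem_cons_of_mem _ hr')) l1 hlen1 hpw.1
    have h2 := row_bound r (hrows r (List.mem_cons_self)) l2 hlen2 hpw.2.1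
    simp only [List.map_cons, List.sum_cons]
    omega

/-- canonical labels for one row -/
def canonRow (k : ℕ) (n : ℕ) : List (Lab k) :=
  (List.range n).map (fun i => if h : i < k then some ⟨i, h⟩ else none)

lemma canonRow_length (k n : ℕ) : (canonRow k n).length = n := by simp [canonRow]

lemma canonRow_getElem (k n : ℕ) (m : ℕ) (hm : m < (canonRow k n).length) :
    (canonRow k n)[m] = if h : m < k then some ⟨m, h⟩ else none := by
  simp [canonRow]

lemma canonRow_count (k n : ℕ) : (canonRow k n).countP (fun o => o.isSome) = min n k := by
  unfold canonRow
  induction n with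
  | zero => simp
  | succ n ih =>
    rw [List.range_succ, List.map_append, List.countP_append, ih]
    by_cases h : n < k <;> simp [h] <;> omega

lemma lb {k : ℕ} : ∀ (T : List (List ℤ)), IsTab T →
    ∃ l : List (Lab k), l.length = (word T).length ∧ ((word T).zip l).Pairwise (R k) ∧
      l.countP (fun o => o.isSome) = (T.map fun row => min row.length k).sum ∧
      ∀ p ∈ (word T).zip l, ∀ j : Fin k, p.2 = some j →
        (j : ℕ) < (T.headD []).length ∧ (T.headD []).getD j 0 ≤ p.1 := by
  intro T
  induction T with
  | nil => exact fun _ => ⟨[], by simp [word], by simp [word], by simp [word], by simp [word]⟩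
  | cons r rs ih =>
    intro hT
    obtain ⟨hrows, hch⟩ := hT
    have hTrs : IsTab rs := ⟨fun r' hr' => hrows r' (List.mem_cons_of_mem _ hr'), hch.tail⟩
    obtain ⟨l1, hlen1, hpw1, hcnt1, hhead1⟩ := ih hTrs
    set l2 := canonRow k r.length with hl2
    have hlen2 : l2.length = r.length := canonRow_length k r.length
    have hzip : (word (r :: rs)).zip (l1 ++ l2) = ((word rs).zip l1) ++ (r.zip l2) := by
      show ((word rs) ++ r).zip _ = _
      rw [List.zip_append hlen1.symm]
    have hzlen2 : (r.zip l2).length = r.length := by rw [List.length_zip, hlen2]; omega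
    have hmem2 : ∀ q ∈ r.zip l2, ∀ j : Fin k, q.2 = some j →
        (j : ℕ) < r.length ∧ q.1 = r.getD j 0 := by
      intro q hq j hj
      obtain ⟨m, hm, hq'⟩ := List.mem_iff_getElem.mp hq
      rw [List.getElem_zip] at hq'
      subst hq'
      rw [canonRow_getElem] at hj
      · by_cases hmk : m < k
        · rw [dif_pos hmk] at hj
          simp only [Option.some.injEq] at hj
          have hjm : (j : ℕ) = m := by rw [← hj]
          have hmr : m < r.length := by rw [hzlen2] at hm; exact hm
          refine ⟨hjm ▸ hmr, ?_⟩
          show r[m]'_ = r.getD (j : ℕ) 0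
          rw [hjm, List.getD_eq_getElem r 0 hmr]
        · rw [dif_neg hmk] at hj; exact absurd hj (by simp)
    have hDom : Dom r (rs.headD []) := by
      cases rs with
      | nil => exact dom_nil r
      | cons r' rs' => exact (List.isChain_cons_cons.mp hch).1
    refine ⟨l1 ++ l2, ?_, ?_, ?_, ?_⟩
    · show _ = (word rs ++ r).length
      simp only [List.length_append, hlen1, hlen2]
    · rw [hzip, List.pairwise_append]
      refine ⟨hpw1, ?_, ?_⟩
      · rw [List.pairwise_iff_getElem]
        intro i j hi hj hij hs he
        exfalso
        rw [List.getElem_zip] at hs he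
        rw [List.getElem_zip] at he
        have hi' : i < r.length := by rw [hzlen2] at hi; exact hi
        have hj' : j < r.length := by rw [hzlen2] at hj; exact hj
        simp only at hs he
        rw [canonRow_getElem k r.length i (by rw [canonRow_length]; exact hi'),
          canonRow_getElem k r.length j (by rw [canonRow_length]; exact hj')] at he
        rw [canonRow_getElem k r.length i (by rw [canonRow_length]; exact hi')] at hs
        by_cases hik : i < k
        · rw [dif_pos hik] at he
          by_cases hjk : j < k
          · rw [dif_pos hjk] at he
            simp only [Option.some.injEq, Fin.mk.injEq] at he
            omega
          · rw [dif_neg hjk] at he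
            exact absurd he (by simp)
        · rw [dif_neg hik] at hs
          simp at hs
      · intro p hp q hq hs he
        obtain ⟨j0, hj0⟩ := Option.isSome_iff_exists.mp hs
        have hq2 : q.2 = some j0 := by rw [← he, hj0]
        obtain ⟨hj0r, hq1⟩ := hmem2 q hq j0 hq2
        obtain ⟨hj0rs, hple⟩ := hhead1 p hp j0 hj0
        have hcol : r.getD j0 0 ≤ (rs.headD []).getD j0 0 := hDom.2 _ hj0rs
        rw [hq1]
        exact le_trans hcol hple
    · rw [List.countP_append, hcnt1, canonRow_count]
      simp only [List.map_cons, List.sum_cons]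
      omega
    · intro p hp j hj
      rw [hzip] at hp
      rcases List.mem_append.mp hp with hp1 | hp2
      · obtain ⟨hj0rs, hple⟩ := hhead1 p hp1 j hj
        have hjr : (j : ℕ) < r.length := lt_of_lt_of_le hj0rs hDom.1
        refine ⟨hjr, ?_⟩
        show r.getD (j : ℕ) 0 ≤ p.1
        exact le_trans (hDom.2 _ hj0rs) hple
      · obtain ⟨hjr, hq1⟩ := hmem2 p hp2 j hj
        refine ⟨hjr, ?_⟩
        show r.getD (j : ℕ) 0 ≤ p.1
        rw [hq1]

lemma countP_ofFn {α : Type*} : ∀ {n : ℕ} (f : Fin n → α) (p : α → Bool),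
    (List.ofFn f).countP p = (Finset.univ.filter fun i => p (f i)).card
  | 0, f, p => by simp
  | n + 1, f, p => by
    rw [List.ofFn_succ, List.countP_cons, countP_ofFn (fun i => f i.succ) p,
      Finset.card_filter, Finset.card_filter, Fin.sum_univ_succ]
    exact Nat.add_comm _ _

lemma countP_eq_card {α : Type*} (l : List α) (p : α → Bool) :
    l.countP p = (Finset.univ.filter fun i : Fin l.length => p (l.get i)).card := by
  conv_lhs => rw [← List.ofFn_get l]
  rw [countP_ofFn]

lemma S_eq_S' (w : List ℤ) (k : ℕ) :
    {N | ∃ f : Fin w.length → Option (Fin k),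
        (∀ i j : Fin w.length, i < j → (f i).isSome → f i = f j → w.get j ≤ w.get i) ∧
        N = (Finset.univ.filter fun i => (f i).isSome).card} = S' w k := by
  ext N
  constructor
  · rintro ⟨f, hf, rfl⟩
    refine ⟨List.ofFn f, List.length_ofFn, ?_, (countP_ofFn f _).symm⟩
    rw [List.pairwise_iff_getElem]
    intro i j hi hj hij
    have hzl : ((w.zip (List.ofFn f)).length) = w.length := by
      rw [List.length_zip, List.length_ofFn]; omega
    have hiw : i < w.length := by omega
    have hjw : j < w.length := by omega
    rw [List.getElem_zip, List.getElem_zip]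
    intro hs he
    have hgf : ∀ (m : ℕ) (hm : m < w.length),
        (List.ofFn f)[m]'(by rw [List.length_ofFn]; exact hm) = f ⟨m, hm⟩ := by
      intro m hm
      rw [List.getElem_ofFn]
    rw [hgf i hiw] at hs
    rw [hgf i hiw] at he
    rw [hgf j hjw] at he
    exact hf ⟨i, hiw⟩ ⟨j, hjw⟩ hij hs he
  · rintro ⟨l, hlen, hpw, rfl⟩
    refine ⟨fun i => l[(i : ℕ)]'(by rw [hlen]; exact i.2), ?_, ?_⟩
    · intro i j hij hs he
      have hzl : ((w.zip l).length) = w.length := by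
        rw [List.length_zip, hlen]; omega
      have := List.pairwise_iff_getElem.mp hpw (i : ℕ) (j : ℕ)
        (by omega) (by omega) hij
      rw [List.getElem_zip, List.getElem_zip] at this
      exact this hs he
    · rw [countP_eq_card]
      refine Finset.card_bij'
        (fun (a : Fin l.length) _ => (⟨a.1, by rw [← hlen]; exact a.2⟩ : Fin w.length))
        (fun (b : Fin w.length) _ => (⟨b.1, by rw [hlen]; exact b.2⟩ : Fin l.length))
        ?_ ?_ ?_ ?_
      · intro a ha
        rw [Finset.mem_filter] at ha ⊢
        exact ⟨Finset.mem_univ _, ha.2⟩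
      · intro b hb
        rw [Finset.mem_filter] at hb ⊢
        exact ⟨Finset.mem_univ _, hb.2⟩
      · intro a _; rfl
      · intro b _; rfl

end Greene

/-- The dual Greene theorem: for every `k`, the maximum total length of a subsequence of
`r` that can be decomposed into `k` non-increasing subsequences equals `α_k^*(Ins(r))`,
the number of boxes in the first `k` columns of the insertion tableau, i.e.
`Σ_i min(λ_i, k)` where `λ` is the shape of `Ins(r)`. -/
theorem greene_dual (r : List ℤ) (k : ℕ) :
    IsGreatest {N | ∃ f : Fin r.length → Option (Fin k),
        (∀ i j : Fin r.length, i < j → (f i).isSome → f i = f j → r.get j ≤ r.get i) ∧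
        N = (Finset.univ.filter fun i => (f i).isSome).card}
      (((ins r).map fun row => min row.length k).sum) := by
  rw [Greene.S_eq_S' r k, ← (Greene.keq_word_ins r).S'_eq]
  constructor
  · obtain ⟨l, h1, h2, h3, -⟩ := Greene.lb (ins r) (Greene.isTab_ins r)
    exact ⟨l, h1, h2, h3.symm⟩
  · rintro N ⟨l, h1, h2, rfl⟩
    exact Greene.ub (ins r) (Greene.isTab_ins r).1 l h1 h2
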